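/- Let P be a vector space over 𝔽₂ of dimension 2n with a nondegenerate alternating bilinear form, let G be any subspace of P, and set S = G ∩ G^⊥ (so S is isotropic and S^⊥ = G + G^⊥). Then for every subspace α of P: [dim((S^⊥ ∩ α) + G) − dim G] + [dim((G^⊥ ∩ α^⊥) + S) − dim S] = dim S^⊥ − dim G. In particular, if dim G = n − k + g and dim S = n − k − g, the right-hand side equals 2k. -/

import Mathlib

open Module

lemma orth_sup {K V : Type*} [Field K] [AddCommGroup V] [Module K V]
    (B : LinearMap.BilinForm K V) (W₁ W₂ : Submodule K V) :
    B.orthogonal (W₁ ⊔ W₂) = B.orthogonal W₁ ⊓ B.orthogonal W₂ := by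
  apply le_antisymm
  · exact le_inf (B.orthogonal_le le_sup_left) (B.orthogonal_le le_sup_right)
  · rintro x ⟨h1, h2⟩ y hy
    obtain ⟨a, ha, b, hb, rfl⟩ := Submodule.mem_sup.mp hy
    show B (a + b) x = 0
    rw [map_add, LinearMap.add_apply, h1 a ha, h2 b hb, add_zero]

lemma orth_inf {K V : Type*} [Field K] [AddCommGroup V] [Module K V]
    [FiniteDimensional K V] (B : LinearMap.BilinForm K V) (hB : B.Nondegenerate)
    (hr : B.IsRefl) (W₁ W₂ : Submodule K V) :
    B.orthogonal (W₁ ⊓ W₂) = B.orthogonal W₁ ⊔ B.orthogonal W₂ := by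
  conv_lhs => rw [← B.orthogonal_orthogonal hB hr W₁, ← B.orthogonal_orthogonal hB hr W₂]
  rw [← orth_sup, B.orthogonal_orthogonal hB hr]

/-- Cleaning identity for subsystem codes.
For a `2n`-dimensional symplectic 𝔽₂-space `P`, a gauge subspace `G ⊆ P`, and the
stabilizer subspace `S = G ∩ G^⊥`, for every subspace `α`:
`[dim((S^⊥ ∩ α) + G) − dim G] + [dim((G^⊥ ∩ α^⊥) + S) − dim S] = dim S^⊥ − dim G`;
in particular, if `dim G = n − k + g` and `dim S = n − k − g`, the right-hand side is `2k`. -/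
theorem cleaning_identity_subsystem {P : Type*} [AddCommGroup P] [Module (ZMod 2) P]
    [FiniteDimensional (ZMod 2) P] (n : ℕ) (hP : finrank (ZMod 2) P = 2 * n)
    (B : LinearMap.BilinForm (ZMod 2) P) (hB : B.Nondegenerate) (halt : B.IsAlt)
    (G S : Submodule (ZMod 2) P) (hS : S = G ⊓ B.orthogonal G)
    (α : Submodule (ZMod 2) P) :
    (((finrank (ZMod 2) ((B.orthogonal S ⊓ α) ⊔ G : Submodule (ZMod 2) P) : ℤ)
            - finrank (ZMod 2) G)
          + ((finrank (ZMod 2) ((B.orthogonal G ⊓ B.orthogonal α) ⊔ S :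
                Submodule (ZMod 2) P) : ℤ) - finrank (ZMod 2) S)
        = (finrank (ZMod 2) (B.orthogonal S) : ℤ) - finrank (ZMod 2) G) ∧
      ∀ k g : ℤ, (finrank (ZMod 2) G : ℤ) = (n : ℤ) - k + g →
        (finrank (ZMod 2) S : ℤ) = (n : ℤ) - k - g →
        (finrank (ZMod 2) (B.orthogonal S) : ℤ) - finrank (ZMod 2) G = 2 * k := by
  have hr : B.IsRefl := halt.isRefl
  set A : Submodule (ZMod 2) P := (B.orthogonal S ⊓ α) ⊔ G with hA
  have hSG : S ≤ B.orthogonal G := by rw [hS]; exact inf_le_right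
  have hAperp : B.orthogonal A = (B.orthogonal G ⊓ B.orthogonal α) ⊔ S := by
    rw [hA, orth_sup, orth_inf B hB hr, B.orthogonal_orthogonal hB hr,
      sup_inf_assoc_of_le _ hSG, sup_comm, inf_comm (B.orthogonal α)]
  have hdimA : finrank (ZMod 2) (B.orthogonal A) =
      finrank (ZMod 2) P - finrank (ZMod 2) A := B.finrank_orthogonal hB A
  have hdimS : finrank (ZMod 2) (B.orthogonal S) =
      finrank (ZMod 2) P - finrank (ZMod 2) S := B.finrank_orthogonal hB S
  have hAle : finrank (ZMod 2) A ≤ finrank (ZMod 2) P := Submodule.finrank_le A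
  have hSle : finrank (ZMod 2) S ≤ finrank (ZMod 2) P := Submodule.finrank_le S
  rw [← hAperp]
  constructor
  · omega
  · intro k g h1 h2; omega
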